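/- Let D = K[y_1,...,y_m]/(y_1^2,...,y_m^2) over a field K of characteristic 0, and let ℓ = y_1 + ⋯ + y_m. Then for every d ≥ 1 and every i, the multiplication map ·ℓ^d : D_i → D_{i+d} has maximal rank (i.e., D has the Strong Lefschetz Property). -/

import Mathlib

open MvPolynomial

set_option synthInstance.maxHeartbeats 400000
set_option maxHeartbeats 1000000

/-- The degree-`n` graded piece of the quotient of a polynomial ring by a
(homogeneous) ideal: the image of the homogeneous degree-`n` polynomials. -/
noncomputable def gradedPiece {K σ : Type*} [Field K] (I : Ideal (MvPolynomial σ K))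
    (n : ℕ) : Submodule K (MvPolynomial σ K ⧸ I) :=
  Submodule.map (Ideal.Quotient.mkₐ K I).toLinearMap (homogeneousSubmodule σ K n)

section Abstract
variable {K : Type*} [Field K] [CharZero K] {M : Type*} [AddCommGroup M] [Module K M]

theorem sl2_inj (m : ℕ) (V : ℕ → Submodule K M) (e f : M →ₗ[K] M)
    (hf0 : ∀ v ∈ V 0, f v = 0)
    (he : ∀ j, ∀ v ∈ V j, e v ∈ V (j + 1))
    (hf : ∀ j, ∀ v ∈ V (j + 1), f v ∈ V j)
    (hcomm : ∀ j, ∀ v ∈ V j, f (e v) = e (f v) + (((m : ℤ) - 2 * j : ℤ) : K) • v) :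
    ∀ i d : ℕ, 2 * i + d ≤ m → ∀ v ∈ V i, (e ^ d) v = 0 → v = 0 := by
  have hp : ∀ (n : ℕ) (w : M), (e ^ (n + 1)) w = e ((e ^ n) w) := fun n w => by
    rw [pow_succ', Module.End.mul_apply]
  -- powers of e stay in the grading
  have hmem : ∀ i k : ℕ, ∀ v ∈ V i, (e ^ k) v ∈ V (i + k) := by
    intro i k
    induction k with
    | zero => intro v hv; simpa using hv
    | succ k ih =>
      intro v hv
      rw [hp]
      exact he (i + k) _ (ih v hv)
  -- iterated commutation
  set γ : ℕ → ℕ → ℤ := fun i k => (k : ℤ) * ((m : ℤ) - 2 * i - k + 1) with hγ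
  have hiter : ∀ i k : ℕ, ∀ v ∈ V i,
      f ((e ^ (k + 1)) v) = (e ^ (k + 1)) (f v) + ((γ i (k + 1) : ℤ) : K) • (e ^ k) v := by
    intro i k
    induction k with
    | zero =>
      intro v hv
      have := hcomm i v hv
      simpa [hγ] using this
    | succ k ih =>
      intro v hv
      have h1 : (e ^ (k + 2)) v = e ((e ^ (k + 1)) v) := hp (k + 1) v
      have h2 := hcomm (i + (k + 1)) _ (hmem i (k + 1) v hv)
      rw [h1, h2, ih v hv]
      rw [map_add, map_smul]
      rw [← hp (k + 1) (f v), ← hp k v]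
      rw [add_assoc]
      congr 1
      rw [add_comm, ← add_smul]
      congr 1
      push_cast [hγ]
      ring
  -- descent: if f v = 0 and e^k v = 0 then v = 0
  have descent : ∀ i k : ℕ, 2 * i + k ≤ m → ∀ v ∈ V i, f v = 0 → (e ^ k) v = 0 → v = 0 := by
    intro i k
    induction k with
    | zero => intro _ v _ _ h0; simpa using h0
    | succ k ih =>
      intro hk v hv hfv hek
      have h1 : f ((e ^ (k + 1)) v) = 0 := by rw [hek]; simp
      rw [hiter i k v hv, hfv, map_zero, zero_add] at h1
      have hγpos : (γ i (k + 1) : ℤ) ≠ 0 := by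
        have h2 : (1 : ℤ) ≤ (m : ℤ) - 2 * i - (k + 1) + 1 := by
          have : 2 * i + (k + 1) ≤ m := hk
          omega
        have : (0 : ℤ) < γ i (k + 1) := by
          rw [hγ]
          positivity
        omega
      have hγK : ((γ i (k + 1) : ℤ) : K) ≠ 0 := by
        simpa using hγpos
      have hek' : (e ^ k) v = 0 := by
        rcases smul_eq_zero.mp h1 with h | h
        · exact absurd h hγK
        · exact h
      exact ih (by omega) v hv hfv hek'
  -- main induction on i
  intro i
  induction i using Nat.strong_induction_on with
  | _ i IH =>
    intro d hd v hv hev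
    rcases Nat.eq_zero_or_pos d with rfl | hd1
    · simpa using hev
    -- first show f v = 0
    have hfv : f v = 0 := by
      rcases Nat.eq_zero_or_pos i with rfl | hi1
      · exact hf0 v hv
      · obtain ⟨i', rfl⟩ : ∃ i', i = i' + 1 := ⟨i - 1, by omega⟩
        obtain ⟨k, rfl⟩ : ∃ k, d = k + 1 := ⟨d - 1, by omega⟩
        have h1 : f ((e ^ (k + 1)) v) = 0 := by rw [hev]; simp
        rw [hiter _ k v hv] at h1
        have h2 : e ((e ^ (k + 1)) (f v)) + ((γ (i' + 1) (k + 1) : ℤ) : K) • e ((e ^ k) v) = 0 := by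
          have := congrArg e h1
          simpa [map_add, map_smul] using this
        have h3 : e ((e ^ k) v) = (e ^ (k + 1)) v := (hp k v).symm
        rw [h3, hev, smul_zero, add_zero] at h2
        have h4 : (e ^ (k + 2)) (f v) = 0 := by rw [hp (k + 1) (f v)]; exact h2
        exact IH i' (by omega) (k + 2) (by omega) (f v) (hf i' v (by exact hv)) h4
    exact descent i d hd v hv hfv hev

end Abstract

section Model
variable (K : Type*) [Field K] (m : ℕ)

/-- Raising operator on the model space. -/
noncomputable def upE : (Finset (Fin m) →₀ K) →ₗ[K] (Finset (Fin m) →₀ K) :=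
  Finsupp.lsum K fun S => LinearMap.toSpanSingleton K _
    (∑ k ∈ Sᶜ, Finsupp.single (insert k S) (1 : K))

/-- Lowering operator on the model space. -/
noncomputable def downF : (Finset (Fin m) →₀ K) →ₗ[K] (Finset (Fin m) →₀ K) :=
  Finsupp.lsum K fun S => LinearMap.toSpanSingleton K _
    (∑ k ∈ S, Finsupp.single (S.erase k) (1 : K))

/-- Graded piece of the model space. -/
def VV (n : ℕ) : Submodule K (Finset (Fin m) →₀ K) :=
  Finsupp.supported K K {S : Finset (Fin m) | S.card = n}

variable {K m}

lemma upE_single (S : Finset (Fin m)) :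
    upE K m (Finsupp.single S (1 : K)) = ∑ k ∈ Sᶜ, Finsupp.single (insert k S) (1 : K) := by
  simp [upE, Finsupp.lsum_single]

lemma downF_single (S : Finset (Fin m)) :
    downF K m (Finsupp.single S (1 : K)) = ∑ k ∈ S, Finsupp.single (S.erase k) (1 : K) := by
  simp [downF, Finsupp.lsum_single]

lemma VV_span (n : ℕ) : VV K m n =
    Submodule.span K ((fun S => Finsupp.single S (1 : K)) '' {S : Finset (Fin m) | S.card = n}) := by
  rw [VV, Finsupp.supported_eq_span_single]

lemma single_mem_VV {S : Finset (Fin m)} {n : ℕ} (h : S.card = n) :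
    Finsupp.single S (1 : K) ∈ VV K m n :=
  Finsupp.single_mem_supported K 1 h

lemma upE_mem {n : ℕ} : ∀ v ∈ VV K m n, upE K m v ∈ VV K m (n + 1) := by
  intro v hv
  rw [VV_span] at hv
  induction hv using Submodule.span_induction with
  | mem x hx =>
    obtain ⟨S, hS, rfl⟩ := hx
    rw [upE_single]
    refine Submodule.sum_mem _ fun k hk => single_mem_VV ?_
    rw [Finset.card_insert_of_notMem (Finset.mem_compl.mp hk), hS]
  | zero => simp
  | add x y _ _ hx hy => rw [map_add]; exact add_mem hx hy
  | smul c x _ hx => rw [map_smul]; exact Submodule.smul_mem _ _ hx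

lemma downF_mem {n : ℕ} : ∀ v ∈ VV K m (n + 1), downF K m v ∈ VV K m n := by
  intro v hv
  rw [VV_span] at hv
  induction hv using Submodule.span_induction with
  | mem x hx =>
    obtain ⟨S, hS, rfl⟩ := hx
    rw [downF_single]
    refine Submodule.sum_mem _ fun k hk => single_mem_VV ?_
    rw [Finset.card_erase_of_mem hk, hS]
    omega
  | zero => simp
  | add x y _ _ hx hy => rw [map_add]; exact add_mem hx hy
  | smul c x _ hx => rw [map_smul]; exact Submodule.smul_mem _ _ hx

lemma downF_VV0 : ∀ v ∈ VV K m 0, downF K m v = 0 := by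
  intro v hv
  rw [VV_span] at hv
  induction hv using Submodule.span_induction with
  | mem x hx =>
    obtain ⟨S, hS, rfl⟩ := hx
    rw [Finset.card_eq_zero.mp hS, downF_single]
    simp
  | zero => simp
  | add x y _ _ hx hy => rw [map_add, hx, hy, add_zero]
  | smul c x _ hx => rw [map_smul, hx, smul_zero]

lemma VV_bot {n : ℕ} (h : m < n) : VV K m n = ⊥ := by
  have : {S : Finset (Fin m) | S.card = n} = ∅ := by
    ext S
    simp only [Set.mem_setOf_eq, Set.mem_empty_iff_false, iff_false]
    intro hS
    have h2 : S.card ≤ m := le_trans (Finset.card_le_univ S) (by simp)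
    omega
  rw [VV, this, Finsupp.supported_empty]

/-- The key commutation relation on basis vectors. -/
lemma comm_single (S : Finset (Fin m)) :
    downF K m (upE K m (Finsupp.single S (1 : K)))
      = upE K m (downF K m (Finsupp.single S (1 : K)))
        + (((m : ℤ) - 2 * S.card : ℤ) : K) • Finsupp.single S (1 : K) := by
  have hcard : S.card ≤ m := le_trans (Finset.card_le_univ S) (by simp)
  have hL : downF K m (upE K m (Finsupp.single S (1 : K)))
      = Sᶜ.card • Finsupp.single S (1 : K)
        + ∑ k ∈ Sᶜ, ∑ j ∈ S, Finsupp.single (insert k (S.erase j)) (1 : K) := by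
    rw [upE_single, map_sum]
    have : ∀ k ∈ Sᶜ, downF K m (Finsupp.single (insert k S) (1 : K))
        = Finsupp.single S (1 : K) + ∑ j ∈ S, Finsupp.single (insert k (S.erase j)) (1 : K) := by
      intro k hk
      have hkS : k ∉ S := Finset.mem_compl.mp hk
      rw [downF_single, Finset.sum_insert hkS, Finset.erase_insert hkS]
      congr 1
      refine Finset.sum_congr rfl fun j hj => ?_
      rw [Finset.erase_insert_of_ne (fun h : k = j => hkS (h ▸ hj))]
    rw [Finset.sum_congr rfl this, Finset.sum_add_distrib, Finset.sum_const]
  have hR : upE K m (downF K m (Finsupp.single S (1 : K)))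
      = S.card • Finsupp.single S (1 : K)
        + ∑ j ∈ S, ∑ k ∈ Sᶜ, Finsupp.single (insert k (S.erase j)) (1 : K) := by
    rw [downF_single, map_sum]
    have : ∀ j ∈ S, upE K m (Finsupp.single (S.erase j) (1 : K))
        = Finsupp.single S (1 : K) + ∑ k ∈ Sᶜ, Finsupp.single (insert k (S.erase j)) (1 : K) := by
      intro j hj
      rw [upE_single, Finset.compl_erase, Finset.sum_insert (by simp [hj]),
        Finset.insert_erase hj]
    rw [Finset.sum_congr rfl this, Finset.sum_add_distrib, Finset.sum_const]
  rw [hL, hR, Finset.sum_comm]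
  have hc : Sᶜ.card = m - S.card := by
    rw [Finset.card_compl]
    simp
  rw [hc]
  have : ((m - S.card : ℕ) • Finsupp.single S (1 : K))
      = (S.card : ℕ) • Finsupp.single S (1 : K)
        + (((m : ℤ) - 2 * S.card : ℤ) : K) • Finsupp.single S (1 : K) := by
    rw [← Nat.cast_smul_eq_nsmul K, ← Nat.cast_smul_eq_nsmul K, ← add_smul]
    congr 1
    push_cast [Nat.cast_sub hcard]
    ring
  rw [this]
  abel

lemma comm_VV {j : ℕ} : ∀ v ∈ VV K m j,
    downF K m (upE K m v) = upE K m (downF K m v) + (((m : ℤ) - 2 * j : ℤ) : K) • v := by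
  intro v hv
  rw [VV_span] at hv
  induction hv using Submodule.span_induction with
  | mem x hx =>
    obtain ⟨S, hS, rfl⟩ := hx
    have := comm_single (K := K) S
    rw [hS] at this
    exact this
  | zero => simp
  | add x y _ _ hx hy => simp only [map_add, hx, hy, smul_add]; abel
  | smul c x _ hx =>
    simp only [map_smul, hx, smul_add, smul_comm c]
end Model
section Model2
variable {K : Type*} [Field K] [CharZero K] {m : ℕ}

lemma upE_pow_mem (d : ℕ) {n : ℕ} : ∀ v ∈ VV K m n, (upE K m ^ d) v ∈ VV K m (n + d) := by
  induction d with
  | zero => intro v hv; simpa using hv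
  | succ d ih =>
    intro v hv
    have h : (upE K m ^ (d + 1)) v = upE K m ((upE K m ^ d) v) := by
      rw [pow_succ', Module.End.mul_apply]
    rw [h, show n + (d + 1) = (n + d) + 1 from rfl]
    exact upE_mem _ (ih v hv)

lemma downF_pow_mem (d : ℕ) {n : ℕ} : ∀ v ∈ VV K m (n + d), (downF K m ^ d) v ∈ VV K m n := by
  induction d generalizing n with
  | zero => intro v hv; simpa using hv
  | succ d ih =>
    intro v hv
    have h : (downF K m ^ (d + 1)) v = (downF K m ^ d) (downF K m v) := by
      rw [pow_succ, Module.End.mul_apply]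
    rw [h]
    exact ih _ (downF_mem _ (by rw [show n + d + 1 = n + (d+1) by omega]; exact hv))

theorem model_inj {i d : ℕ} (h : 2 * i + d ≤ m) :
    ∀ v ∈ VV K m i, (upE K m ^ d) v = 0 → v = 0 :=
  sl2_inj m (VV K m) (upE K m) (downF K m) downF_VV0 (fun _ => upE_mem)
    (fun _ => downF_mem) (fun _ => comm_VV) i d h

theorem model_inj_down {j d : ℕ} (h : m + d ≤ 2 * j) (hj : j ≤ m) :
    ∀ v ∈ VV K m j, (downF K m ^ d) v = 0 → v = 0 := by
  set W : ℕ → Submodule K (Finset (Fin m) →₀ K) :=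
    fun n => if n ≤ m then VV K m (m - n) else ⊥ with hW
  have key := sl2_inj m W (downF K m) (upE K m) ?_ ?_ ?_ ?_ (m - j) d (by omega)
  · intro v hv hd
    refine key v ?_ hd
    have h1 : m - j ≤ m := by omega
    have h2 : m - (m - j) = j := by omega
    rw [hW]
    simp only [h1, if_pos, h2]
    exact hv
  · -- hf0 : v ∈ W 0 → upE v = 0
    intro v hv
    have hv' : v ∈ VV K m m := by simpa [hW] using hv
    have := upE_mem _ hv'
    rw [VV_bot (by omega)] at this
    simpa using this
  · -- he : v ∈ W n → downF v ∈ W (n+1)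
    intro n v hv
    rcases lt_trichotomy n m with hn | hn | hn
    · have hv' : v ∈ VV K m (m - n) := by simpa [hW, hn.le] using hv
      have h1 : m - n = (m - (n + 1)) + 1 := by omega
      rw [h1] at hv'
      have := downF_mem _ hv'
      rw [hW]
      simp only [Nat.succ_le_of_lt hn, if_pos]
      exact this
    · have h0 : m - n = 0 := by omega
      have hv' : v ∈ VV K m 0 := by simpa [hW, hn.le, h0] using hv
      rw [downF_VV0 v hv']
      exact Submodule.zero_mem _
    · have hv' : v = 0 := by
        have h3 := hv
        simp only [hW] at h3
        rw [if_neg (by omega : ¬ (n ≤ m))] at h3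
        simpa using h3
      rw [hv', map_zero]
      exact Submodule.zero_mem _
  · -- hf : v ∈ W (n+1) → upE v ∈ W n
    intro n v hv
    rcases Nat.lt_or_ge n m with hn | hn
    · have hv' : v ∈ VV K m (m - (n + 1)) := by simpa [hW, Nat.succ_le_of_lt hn] using hv
      have := upE_mem _ hv'
      have h1 : m - (n + 1) + 1 = m - n := by omega
      rw [h1] at this
      rw [hW]
      simp only [hn.le, if_pos]
      exact this
    · have hv' : v = 0 := by
        have h3 := hv
        simp only [hW] at h3
        rw [if_neg (by omega : ¬ (n + 1 ≤ m))] at h3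
        simpa using h3
      rw [hv', map_zero]
      exact Submodule.zero_mem _
  · -- hcomm flipped
    intro n v hv
    rcases le_or_gt n m with hn | hn
    · have hv' : v ∈ VV K m (m - n) := by simpa [hW, hn] using hv
      have hc := comm_VV v hv'
      have hcast : ((((m : ℤ) - 2 * n : ℤ)) : K) = -((((m : ℤ) - 2 * (m - n : ℕ) : ℤ)) : K) := by
        push_cast [Nat.cast_sub hn]
        ring
      rw [hcast, hc, neg_smul]
      abel
    · have hv' : v = 0 := by
        have h3 := hv
        simp only [hW] at h3
        rw [if_neg (by omega : ¬ (n ≤ m))] at h3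
        simpa using h3
      rw [hv']
      simp

lemma filter_eq_filter (S T : Finset (Fin m)) :
    T.filter (fun j => T.erase j = S) = Sᶜ.filter (fun k => T = insert k S) := by
  ext a
  simp only [Finset.mem_filter, Finset.mem_compl]
  constructor
  · rintro ⟨haT, hE⟩
    have haS : a ∉ S := hE ▸ Finset.notMem_erase a T
    exact ⟨haS, by rw [← hE, Finset.insert_erase haT]⟩
  · rintro ⟨haS, hT⟩
    subst hT
    exact ⟨Finset.mem_insert_self a S, Finset.erase_insert haS⟩

/-- The linear functional `g ↦ ∑ S, g S * h S`. -/
noncomputable def Bmap (h : Finset (Fin m) →₀ K) : (Finset (Fin m) →₀ K) →ₗ[K] K :=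
  Finsupp.lsum K fun S => LinearMap.toSpanSingleton K K (h S)

lemma Bmap_single (h : Finset (Fin m) →₀ K) (S : Finset (Fin m)) (c : K) :
    Bmap h (Finsupp.single S c) = c * h S := by
  simp [Bmap, Finsupp.lsum_single, LinearMap.toSpanSingleton_apply, smul_eq_mul]

lemma downF_apply (h : Finset (Fin m) →₀ K) (S : Finset (Fin m)) :
    (downF K m h) S = ∑ k ∈ Sᶜ, h (insert k S) := by
  induction h using Finsupp.induction_linear with
  | zero => simp
  | add f g hf hg => rw [map_add, Finsupp.add_apply, hf, hg, ← Finset.sum_add_distrib]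
                     exact Finset.sum_congr rfl fun k _ => rfl
  | single T c =>
    have h1 : downF K m (Finsupp.single T c) = c • ∑ j ∈ T, Finsupp.single (T.erase j) (1:K) := by
      have : Finsupp.single T c = c • Finsupp.single T (1:K) := by
        rw [Finsupp.smul_single, smul_eq_mul, mul_one]
      rw [this, map_smul, downF_single]
    rw [h1, Finsupp.smul_apply]
    have h2 : (∑ j ∈ T, Finsupp.single (T.erase j) (1:K)) S
        = ∑ j ∈ T, if T.erase j = S then (1:K) else 0 := by
      rw [Finsupp.finset_sum_apply]
      exact Finset.sum_congr rfl fun j _ => Finsupp.single_apply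
    rw [h2]
    have h3 : ∑ k ∈ Sᶜ, (Finsupp.single T c) (insert k S)
        = ∑ k ∈ Sᶜ, if T = insert k S then c else 0 := by
      exact Finset.sum_congr rfl fun k _ => Finsupp.single_apply
    rw [h3, ← Finset.sum_filter, ← Finset.sum_filter, ← filter_eq_filter,
      Finset.sum_const, Finset.sum_const, smul_eq_mul, mul_comm]
    simp [mul_comm]

lemma Bmap_adjoint (h x : Finset (Fin m) →₀ K) :
    Bmap h (upE K m x) = Bmap (downF K m h) x := by
  induction x using Finsupp.induction_linear with
  | zero => simp
  | add f g hf hg => rw [map_add, map_add, hf, hg]; exact (map_add _ _ _).symm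
  | single S c =>
    have h1 : upE K m (Finsupp.single S c) = c • ∑ k ∈ Sᶜ, Finsupp.single (insert k S) (1:K) := by
      have : Finsupp.single S c = c • Finsupp.single S (1:K) := by
        rw [Finsupp.smul_single, smul_eq_mul, mul_one]
      rw [this, map_smul, upE_single]
    rw [h1, map_smul, map_sum]
    simp only [Bmap_single, one_mul, smul_eq_mul, Finset.mul_sum, downF_apply]

lemma Bmap_adjoint_pow (d : ℕ) (h x : Finset (Fin m) →₀ K) :
    Bmap h ((upE K m ^ d) x) = Bmap ((downF K m ^ d) h) x := by
  induction d generalizing x with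
  | zero => simp
  | succ d ih =>
    have h1 : (upE K m ^ (d + 1)) x = (upE K m ^ d) (upE K m x) := by
      rw [pow_succ, Module.End.mul_apply]
    have h2 : downF K m ((downF K m ^ d) h) = (downF K m ^ (d + 1)) h := by
      rw [pow_succ', Module.End.mul_apply]
    rw [h1, ih, Bmap_adjoint, h2]

lemma mem_VV_apply_ne {v : Finset (Fin m) →₀ K} {n : ℕ} (hv : v ∈ VV K m n)
    {S : Finset (Fin m)} (hS : S.card ≠ n) : v S = 0 := by
  rw [VV, Finsupp.mem_supported] at hv
  by_contra h
  exact hS (hv (Finsupp.mem_support_iff.mpr h))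

theorem model_surj {i d : ℕ} (h : m ≤ 2 * i + d) (hid : i + d ≤ m) :
    ∀ y ∈ VV K m (i + d), ∃ x ∈ VV K m i, (upE K m ^ d) x = y := by
  intro y hy
  by_contra hcon
  push_neg at hcon
  set W : Submodule K (Finset (Fin m) →₀ K) := Submodule.map (upE K m ^ d) (VV K m i) with hWdef
  have hyW : y ∉ W := by
    intro hmem
    obtain ⟨x, hx, hxy⟩ := hmem
    exact hcon x hx hxy
  -- get a functional vanishing on W with φ y ≠ 0
  have hqy : W.mkQ y ≠ 0 := by
    intro h0
    exact hyW ((Submodule.Quotient.mk_eq_zero W).mp h0)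
  obtain ⟨ψ, hψ⟩ : ∃ ψ : Module.Dual K ((Finset (Fin m) →₀ K) ⧸ W), ψ (W.mkQ y) ≠ 0 := by
    by_contra hall
    push_neg at hall
    exact hqy ((Module.forall_dual_apply_eq_zero_iff K _).mp hall)
  set φ : (Finset (Fin m) →₀ K) →ₗ[K] K := ψ ∘ₗ W.mkQ with hφdef
  have hφW : ∀ w ∈ W, φ w = 0 := by
    intro w hw
    have : W.mkQ w = 0 := (Submodule.Quotient.mk_eq_zero W).mpr hw
    simp [hφdef, this]
  have hφy : φ y ≠ 0 := hψ
  -- the representing element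
  set f₀ : Finset (Fin m) →₀ K := Finsupp.equivFunOnFinite.symm
    (fun S => if S.card = i + d then φ (Finsupp.single S 1) else 0) with hf₀def
  have hf₀apply : ∀ S : Finset (Fin m),
      f₀ S = if S.card = i + d then φ (Finsupp.single S 1) else 0 := fun S => rfl
  have hf₀mem : f₀ ∈ VV K m (i + d) := by
    rw [VV, Finsupp.mem_supported]
    intro S hS
    have hS' : f₀ S ≠ 0 := Finsupp.mem_support_iff.mp hS
    by_contra hc
    have hc' : ¬ (S.card = i + d) := hc
    exact hS' (by rw [hf₀apply, if_neg hc'])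
  -- φ agrees with Bmap f₀ on VV (i+d)
  have hrep : ∀ g ∈ VV K m (i + d), φ g = Bmap f₀ g := by
    intro g hg
    rw [VV_span] at hg
    induction hg using Submodule.span_induction with
    | mem x hx =>
      obtain ⟨S, hS, rfl⟩ := hx
      have hS' : S.card = i + d := hS
      rw [Bmap_single, one_mul, hf₀apply, if_pos hS']
    | zero => simp
    | add x y _ _ hx hy => rw [map_add, map_add, hx, hy]
    | smul c x _ hx => rw [map_smul, map_smul, hx]
  -- downF^d f₀ = 0
  have hdown : (downF K m ^ d) f₀ = 0 := by
    have hdmem : (downF K m ^ d) f₀ ∈ VV K m i := downF_pow_mem d f₀ hf₀mem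
    ext S
    rcases eq_or_ne S.card i with hS | hS
    · have h1 : (upE K m ^ d) (Finsupp.single S (1:K)) ∈ W :=
        ⟨Finsupp.single S 1, single_mem_VV hS, rfl⟩
      have h2 : (upE K m ^ d) (Finsupp.single S (1:K)) ∈ VV K m (i + d) :=
        upE_pow_mem d _ (single_mem_VV hS)
      have h3 : Bmap f₀ ((upE K m ^ d) (Finsupp.single S 1)) = 0 := by
        rw [← hrep _ h2]
        exact hφW _ h1
      rw [Bmap_adjoint_pow, Bmap_single, one_mul] at h3
      simpa using h3
    · simp [mem_VV_apply_ne hdmem hS]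
  -- so f₀ = 0 by injectivity of downF^d
  have hf₀0 : f₀ = 0 :=
    model_inj_down (by omega) (by omega) f₀ hf₀mem hdown
  -- contradiction
  apply hφy
  rw [hrep y hy, hf₀0]
  have : Bmap (0 : Finset (Fin m) →₀ K) = 0 := by
    apply Finsupp.lhom_ext
    intro S c
    rw [Bmap_single]
    simp
  rw [this]
  simp

end Model2
section Transfer
variable (K : Type*) [Field K] (m : ℕ)

/-- the ideal generated by the squares of the variables -/
noncomputable def sqIdeal : Ideal (MvPolynomial (Fin m) K) :=
  Ideal.span (Set.range fun k : Fin m => (X k : MvPolynomial (Fin m) K) ^ 2)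

/-- squarefree monomial attached to a finset -/
noncomputable def xS (S : Finset (Fin m)) : MvPolynomial (Fin m) K := ∏ k ∈ S, X k

variable {K m}

/-- exponent vector of a squarefree monomial -/
noncomputable def expS {m : ℕ} (S : Finset (Fin m)) : Fin m →₀ ℕ := ∑ k ∈ S, Finsupp.single k 1

lemma expS_apply (S : Finset (Fin m)) (k : Fin m) :
    expS (m := m) S k = if k ∈ S then 1 else 0 := by
  rw [expS, Finsupp.finset_sum_apply]
  rcases Finset.decidableMem k S with h | h
  · rw [if_neg h, Finset.sum_eq_zero]
    intro j hj
    rw [Finsupp.single_apply, if_neg (fun hjk : j = k => h (hjk ▸ hj))]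
  · rw [if_pos h, Finset.sum_eq_single_of_mem k h, Finsupp.single_apply, if_pos rfl]
    intro j hj hjk
    rw [Finsupp.single_apply, if_neg hjk]

lemma expS_support (S : Finset (Fin m)) : (expS (m := m) S).support = S := by
  ext k
  rw [Finsupp.mem_support_iff, expS_apply]
  rcases Finset.decidableMem k S with h | h
  · simp [h]
  · simp [h]

lemma expS_injective (S T : Finset (Fin m)) (h : expS (m := m) S = expS T) : S = T := by
  rw [← expS_support S, ← expS_support T, h]

lemma expS_degree (S : Finset (Fin m)) : (expS (m := m) S).degree = S.card := by
  rw [Finsupp.degree_apply, expS_support]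
  rw [Finset.card_eq_sum_ones]
  refine Finset.sum_congr rfl fun k hk => ?_
  rw [expS_apply, if_pos hk]

lemma expS_squarefree (S : Finset (Fin m)) (k : Fin m) : expS (m := m) S k ≤ 1 := by
  rw [expS_apply]
  split <;> omega

lemma xS_eq_monomial (S : Finset (Fin m)) : xS K m S = monomial (expS S) 1 := by
  classical
  induction S using Finset.induction_on with
  | empty => simp [xS, expS]
  | @insert k S hk ih =>
    have hexp : expS (insert k S) = Finsupp.single k 1 + expS S := by
      simp only [expS]
      rw [Finset.sum_insert hk]
    rw [xS, Finset.prod_insert hk, ← xS, ih, hexp,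
      show (X k : MvPolynomial (Fin m) K) = monomial (Finsupp.single k 1) 1 from rfl,
      monomial_mul, one_mul]

lemma coeff_xS (S T : Finset (Fin m)) :
    coeff (expS T) (xS K m S) = if S = T then (1 : K) else 0 := by
  rw [xS_eq_monomial, coeff_monomial]
  by_cases h : S = T
  · rw [if_pos h, if_pos (by rw [h])]
  · rw [if_neg h, if_neg (fun he => h (expS_injective _ _ he))]

lemma xS_isHomogeneous (S : Finset (Fin m)) : (xS K m S).IsHomogeneous S.card := by
  rw [xS_eq_monomial]
  exact isHomogeneous_monomial _ (expS_degree S)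

/-- squarefree coefficients of elements of the square ideal vanish -/
lemma sqIdeal_coeff_squarefree {p : MvPolynomial (Fin m) K} (hp : p ∈ sqIdeal K m)
    (μ : Fin m →₀ ℕ) (hμ : ∀ k, μ k ≤ 1) : coeff μ p = 0 := by
  rw [sqIdeal, Ideal.mem_span_range_iff_exists_fun] at hp
  obtain ⟨c, rfl⟩ := hp
  rw [coeff_sum]
  refine Finset.sum_eq_zero fun k _ => ?_
  have h2 : c k * X k ^ 2 = c k * X k * X k := by ring
  rw [h2, coeff_mul_X']
  split
  · rw [coeff_mul_X', if_neg]
    rw [Finsupp.mem_support_iff]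
    simp only [Finsupp.tsub_apply, Finsupp.single_eq_same, ne_eq, not_not]
    have := hμ k
    omega
  · rfl

variable (K m)

/-- lift of the model to polynomials -/
noncomputable def Psi : (Finset (Fin m) →₀ K) →ₗ[K] MvPolynomial (Fin m) K :=
  Finsupp.lsum K fun S => LinearMap.toSpanSingleton K _ (xS K m S)

/-- the model mapped to the quotient ring -/
noncomputable def Phi : (Finset (Fin m) →₀ K) →ₗ[K]
    (MvPolynomial (Fin m) K ⧸ sqIdeal K m) :=
  (Ideal.Quotient.mkₐ K (sqIdeal K m)).toLinearMap ∘ₗ Psi K m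

variable {K m}

lemma Psi_single (S : Finset (Fin m)) (c : K) :
    Psi K m (Finsupp.single S c) = c • xS K m S := by
  simp [Psi, Finsupp.lsum_single, LinearMap.toSpanSingleton_apply]

lemma coeff_Psi (f : Finset (Fin m) →₀ K) (T : Finset (Fin m)) :
    coeff (expS T) (Psi K m f) = f T := by
  induction f using Finsupp.induction_linear with
  | zero => simp
  | add f g hf hg => rw [map_add, coeff_add, hf, hg]; rfl
  | single S c =>
    rw [Psi_single, coeff_smul, coeff_xS, Finsupp.single_apply, smul_eq_mul]
    by_cases h : S = T
    · rw [if_pos h, if_pos h, mul_one]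
    · rw [if_neg h, if_neg h, mul_zero]

lemma Psi_inj {f : Finset (Fin m) →₀ K} (h : Psi K m f ∈ sqIdeal K m) : f = 0 := by
  ext T
  have := sqIdeal_coeff_squarefree h (expS T) (expS_squarefree T)
  rw [coeff_Psi] at this
  simpa using this

lemma Psi_mem_homog {n : ℕ} : ∀ f ∈ VV K m n,
    Psi K m f ∈ homogeneousSubmodule (Fin m) K n := by
  intro f hf
  rw [VV_span] at hf
  induction hf using Submodule.span_induction with
  | mem x hx =>
    obtain ⟨S, hS, rfl⟩ := hx
    rw [Psi_single, one_smul, mem_homogeneousSubmodule]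
    have hS' : S.card = n := hS
    exact hS' ▸ xS_isHomogeneous S
  | zero => simp
  | add x y _ _ hx hy => rw [map_add]; exact add_mem hx hy
  | smul c x _ hx => rw [map_smul]; exact Submodule.smul_mem _ _ hx

/-- polynomials with no squarefree monomials lie in the ideal -/
lemma mem_sqIdeal_of_no_squarefree {q : MvPolynomial (Fin m) K}
    (h : ∀ T : Finset (Fin m), coeff (expS T) q = 0) : q ∈ sqIdeal K m := by
  rw [as_sum q]
  refine Submodule.sum_mem _ fun d hd => ?_
  by_cases hsq : ∀ k, d k ≤ 1
  · -- d is squarefree, so it is expS of its support, and the coefficient vanishes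
    exfalso
    have hds : d = expS d.support := by
      ext k
      rw [expS_apply]
      by_cases hk : k ∈ d.support
      · rw [if_pos hk]
        have := Finsupp.mem_support_iff.mp hk
        have := hsq k
        omega
      · rw [if_neg hk]
        exact Finsupp.notMem_support_iff.mp hk
    rw [MvPolynomial.mem_support_iff] at hd
    exact hd (by rw [hds]; exact h d.support)
  · push_neg at hsq
    obtain ⟨k, hk⟩ := hsq
    have hle : Finsupp.single k 2 ≤ d := Finsupp.single_le_iff.mpr hk
    have hdec : monomial d (coeff d q)
        = monomial (d - Finsupp.single k 2) (coeff d q) * (X k ^ 2) := by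
      rw [X_pow_eq_monomial, monomial_mul, mul_one, tsub_add_cancel_of_le hle]
    rw [hdec]
    exact Ideal.mul_mem_left _ _ (Ideal.subset_span ⟨k, rfl⟩)

/-- representing a homogeneous polynomial in the model -/
noncomputable def sigma (p : MvPolynomial (Fin m) K) : Finset (Fin m) →₀ K :=
  Finsupp.equivFunOnFinite.symm fun S => coeff (expS S) p

lemma sigma_apply (p : MvPolynomial (Fin m) K) (S : Finset (Fin m)) :
    sigma p S = coeff (expS S) p := rfl

lemma sigma_mem_VV {p : MvPolynomial (Fin m) K} {n : ℕ} (hp : p.IsHomogeneous n) :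
    sigma p ∈ VV K m n := by
  rw [VV, Finsupp.mem_supported]
  intro S hS
  have hS' : sigma p S ≠ 0 := Finsupp.mem_support_iff.mp hS
  rw [sigma_apply] at hS'
  by_contra hc
  have : (expS (m := m) S).degree ≠ n := by rw [expS_degree]; exact hc
  exact hS' (hp.coeff_eq_zero this)

lemma sigma_spec {p : MvPolynomial (Fin m) K} :
    p - Psi K m (sigma p) ∈ sqIdeal K m := by
  refine mem_sqIdeal_of_no_squarefree fun T => ?_
  rw [coeff_sub, coeff_Psi, sigma_apply, sub_self]

end Transfer
section Final
variable {K : Type*} [Field K] {m : ℕ}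

lemma Phi_single (S : Finset (Fin m)) (c : K) :
    Phi K m (Finsupp.single S c) = c • Ideal.Quotient.mk (sqIdeal K m) (xS K m S) := by
  simp [Phi, Psi_single, Ideal.Quotient.mkₐ_eq_mk]
  exact map_smul (Ideal.Quotient.mkₐ K (sqIdeal K m)) c (xS K m S)

lemma X_mul_xS_mem {S : Finset (Fin m)} {k : Fin m} (hk : k ∈ S) :
    X k * xS K m S ∈ sqIdeal K m := by
  have h1 : xS K m S = X k * xS K m (S.erase k) := by
    rw [xS, xS, Finset.mul_prod_erase _ _ hk]
  have h2 : X k * xS K m S = xS K m (S.erase k) * (X k ^ 2) := by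
    rw [h1]; ring
  rw [h2]
  exact Ideal.mul_mem_left _ _ (Ideal.subset_span ⟨k, rfl⟩)

lemma intertwine (f : Finset (Fin m) →₀ K) :
    Phi K m (upE K m f) = (Ideal.Quotient.mk (sqIdeal K m)
      (∑ k : Fin m, (X k : MvPolynomial (Fin m) K))) * Phi K m f := by
  induction f using Finsupp.induction_linear with
  | zero => simp
  | add f g hf hg => rw [map_add, map_add, hf, hg, ← mul_add, ← map_add]
  | single S c =>
    have h1 : upE K m (Finsupp.single S c) = c • ∑ k ∈ Sᶜ, Finsupp.single (insert k S) (1:K) := by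
      have : Finsupp.single S c = c • Finsupp.single S (1:K) := by
        rw [Finsupp.smul_single, smul_eq_mul, mul_one]
      rw [this, map_smul, upE_single]
    rw [h1, map_smul, map_sum, Phi_single]
    rw [mul_smul_comm]
    congr 1
    rw [← map_mul]
    have h2 : (∑ k : Fin m, (X k : MvPolynomial (Fin m) K)) * xS K m S
        = ∑ k : Fin m, X k * xS K m S := by rw [Finset.sum_mul]
    rw [h2, map_sum]
    have h3 : ∀ k : Fin m, k ∈ S →
        Ideal.Quotient.mk (sqIdeal K m) (X k * xS K m S) = 0 := fun k hk =>
      (Ideal.Quotient.eq_zero_iff_mem).mpr (X_mul_xS_mem hk)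
    rw [← Finset.sum_add_sum_compl S fun k => Ideal.Quotient.mk (sqIdeal K m) (X k * xS K m S)]
    rw [Finset.sum_eq_zero h3, zero_add]
    refine (Finset.sum_congr rfl fun k hk => ?_).symm
    have hk' : k ∉ S := Finset.mem_compl.mp hk
    rw [Phi_single, one_smul]
    congr 1
    rw [xS, xS, Finset.prod_insert hk']

lemma intertwine_pow (d : ℕ) (f : Finset (Fin m) →₀ K) :
    Phi K m ((upE K m ^ d) f) = (Ideal.Quotient.mk (sqIdeal K m)
      (∑ k : Fin m, (X k : MvPolynomial (Fin m) K))) ^ d * Phi K m f := by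
  induction d generalizing f with
  | zero => simp
  | succ d ih =>
    have h1 : (upE K m ^ (d + 1)) f = (upE K m ^ d) (upE K m f) := by
      rw [pow_succ, Module.End.mul_apply]
    rw [h1, ih, intertwine, pow_succ]
    ring

lemma Phi_inj {f : Finset (Fin m) →₀ K} (h : Phi K m f = 0) : f = 0 := by
  apply Psi_inj (m := m)
  rw [← Ideal.Quotient.eq_zero_iff_mem]
  have : Phi K m f = Ideal.Quotient.mk (sqIdeal K m) (Psi K m f) := by
    simp [Phi, Ideal.Quotient.mkₐ_eq_mk]
  rw [← this, h]

lemma Phi_mem_gradedPiece {n : ℕ} {f : Finset (Fin m) →₀ K} (hf : f ∈ VV K m n) :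
    Phi K m f ∈ gradedPiece (sqIdeal K m) n :=
  ⟨Psi K m f, Psi_mem_homog f hf, rfl⟩

lemma gradedPiece_repr {n : ℕ} {y : MvPolynomial (Fin m) K ⧸ sqIdeal K m}
    (hy : y ∈ gradedPiece (sqIdeal K m) n) : ∃ f ∈ VV K m n, Phi K m f = y := by
  obtain ⟨p, hp, rfl⟩ := hy
  refine ⟨sigma p, sigma_mem_VV ((mem_homogeneousSubmodule _ _).mp hp), ?_⟩
  have : Phi K m (sigma p) = Ideal.Quotient.mk (sqIdeal K m) (Psi K m (sigma p)) := by
    simp [Phi, Ideal.Quotient.mkₐ_eq_mk]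
  rw [this]
  show _ = Ideal.Quotient.mkₐ K (sqIdeal K m) p
  rw [Ideal.Quotient.mkₐ_eq_mk]
  rw [Ideal.Quotient.eq]
  have h := Submodule.neg_mem _ (sigma_spec (p := p) (K := K) (m := m))
  rw [neg_sub] at h
  exact h

end Final

/-- `D = K[y_1,…,y_m]/(y_1^2,…,y_m^2)` with `char K = 0` has the Strong Lefschetz
Property: for `ℓ = y_1 + ⋯ + y_m`, every `d ≥ 1` and every `i`, the multiplication
map `·ℓ^d : D_i → D_{i+d}` has maximal rank (it is injective or surjective). -/
theorem stmt4 {K : Type*} [Field K] [CharZero K] (m : ℕ) :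
    ∀ d : ℕ, 1 ≤ d → ∀ i : ℕ,
      (∀ x ∈ gradedPiece (K := K) (σ := Fin m)
          (Ideal.span (Set.range fun k : Fin m => (X k : MvPolynomial (Fin m) K) ^ 2)) i,
        (Ideal.Quotient.mk _ (∑ k : Fin m, (X k : MvPolynomial (Fin m) K))) ^ d * x = 0 → x = 0) ∨
      (∀ y ∈ gradedPiece (K := K) (σ := Fin m)
          (Ideal.span (Set.range fun k : Fin m => (X k : MvPolynomial (Fin m) K) ^ 2)) (i + d),
        ∃ x ∈ gradedPiece (K := K) (σ := Fin m)
          (Ideal.span (Set.range fun k : Fin m => (X k : MvPolynomial (Fin m) K) ^ 2)) i,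
        (Ideal.Quotient.mk _ (∑ k : Fin m, (X k : MvPolynomial (Fin m) K))) ^ d * x = y) := by
  intro d _ i
  rcases le_or_gt (2 * i + d) m with hcase | hcase
  · left
    intro x hx hx0
    have hx' : x ∈ gradedPiece (sqIdeal K m) i := hx
    obtain ⟨f, hf, rfl⟩ := gradedPiece_repr hx'
    have h1 : Phi K m ((upE K m ^ d) f) = 0 := by
      rw [intertwine_pow]
      exact hx0
    have h2 : (upE K m ^ d) f = 0 := Phi_inj h1
    have h3 : f = 0 := model_inj hcase f hf h2
    rw [h3, map_zero]
    rfl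
  · right
    intro y hy
    have hy' : y ∈ gradedPiece (sqIdeal K m) (i + d) := hy
    obtain ⟨g, hg, rfl⟩ := gradedPiece_repr hy'
    rcases le_or_gt (i + d) m with hidm | hidm
    · obtain ⟨f, hf, hfg⟩ := model_surj (by omega) hidm g hg
      refine ⟨Phi K m f, Phi_mem_gradedPiece hf, ?_⟩
      show (Ideal.Quotient.mk (sqIdeal K m) _) ^ d * _ = _
      rw [← intertwine_pow, hfg]
    · have hg0 : g = 0 := by
        have := hg
        rw [VV_bot hidm] at this
        simpa using this
      refine ⟨0, Submodule.zero_mem _, ?_⟩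
      rw [hg0, map_zero, mul_zero]
      rfl
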